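/- There exists a cover and a family of compatible-looking sections that admits no gluing: with L₁ = L₂ = L = {R,S} (unary relations), X₁ = {x,u}, X₂ = {y,v}, X = {z,w}, cover maps f₁ : x ↦ z, u ↦ w and f₂ : y ↦ z, v ↦ w, and sections s₁ = closure of {R(x), S(u)} and s₂ = closure of {S(y), R(v)}, there is no s ∈ F(L,X) with F(f₁)(s) = s₁ and F(f₂)(s) = s₂. -/
import Mathlib


/-- A literal: a polarity, a relation symbol, and an arity-indexed tuple of variables. -/
structure Lit (Rel Var : Type) (ar : Rel → ℕ) where
  pos : Bool
  rel : Rel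
  args : Fin (ar rel) → Var

namespace Lit
variable {Rel Var W : Type} {ar : Rel → ℕ}

/-- Substitution of variables in a literal. -/
def map (f : Var → W) (l : Lit Rel Var ar) : Lit Rel W ar :=
  ⟨l.pos, l.rel, f ∘ l.args⟩

/-- The complementary literal. -/
def compl (l : Lit Rel Var ar) : Lit Rel Var ar := ⟨!l.pos, l.rel, l.args⟩

/-- The literal is over vocabulary `L` and variable set `X`. -/
def Over (L : Set Rel) (X : Set Var) (l : Lit Rel Var ar) : Prop :=
  l.rel ∈ L ∧ ∀ i, l.args i ∈ X

end Lit

/-- A set of literals is consistent if it contains no complementary pair. -/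
def Consistent {Rel Var : Type} {ar : Rel → ℕ} (s : Set (Lit Rel Var ar)) : Prop :=
  ∀ l ∈ s, l.compl ∉ s

/-- An element of `F(L,X)`: a consistent (deductively closed, which is trivial for
literals) set of literals over vocabulary `L` and variables `X`. -/
def IsSection {Rel Var : Type} {ar : Rel → ℕ} (L : Set Rel) (X : Set Var)
    (s : Set (Lit Rel Var ar)) : Prop :=
  (∀ l ∈ s, l.Over L X) ∧ Consistent s

/-- The restriction map `F(f) : F(L',Y) → F(L,X)` along `f : (L,X) → (L',Y)`:
`F(f)(s) ⊢ ±A(x⃗) iff s ⊢ ±A(f(x⃗))`. -/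
def restrict {Rel Var : Type} {ar : Rel → ℕ} (f : Var → Var) (L : Set Rel) (X : Set Var)
    (s : Set (Lit Rel Var ar)) : Set (Lit Rel Var ar) :=
  { l | l.Over L X ∧ l.map f ∈ s }

/-- Arities: both relation symbols `R = 0` and `S = 1` are unary. -/
def ar2 : Fin 2 → ℕ := fun _ => 1

/-- The positive unary literal `r(v)`. -/
def atm (r : Fin 2) (v : ℕ) : Lit (Fin 2) ℕ ar2 := ⟨true, r, fun _ => v⟩

/-- with `x = 0, u = 1, y = 2, v = 3, z = 4, w = 5`, `R = 0`, `S = 1`,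
cover maps `f₁ : x ↦ z, u ↦ w` and `f₂ : y ↦ z, v ↦ w`, and sections
`s₁ = {R(x), S(u)}`, `s₂ = {S(y), R(v)}`, there is no gluing. -/
theorem no_gluing_example :
    ¬ ∃ s : Set (Lit (Fin 2) ℕ ar2),
      IsSection {0, 1} {4, 5} s ∧
      restrict (fun n => if n = 0 then 4 else 5) {0, 1} {0, 1} s = {atm 0 0, atm 1 1} ∧
      restrict (fun n => if n = 2 then 4 else 5) {0, 1} {2, 3} s = {atm 1 2, atm 0 3} := by
  rintro ⟨s, _, h1, h2⟩
  -- R(z) = atm 0 4 ∈ s, since atm 0 0 ∈ restrict f₁ ... s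
  have hmem : atm 0 0 ∈ restrict (fun n => if n = 0 then 4 else 5) {0, 1} {0, 1} s := by
    rw [h1]; left; rfl
  have hRz : (atm 0 0).map (fun n => if n = 0 then 4 else 5) ∈ s := hmem.2
  -- then atm 0 2 ∈ restrict f₂ ... s
  have hmem2 : atm 0 2 ∈ restrict (fun n => if n = 2 then 4 else 5) {0, 1} {2, 3} s := by
    refine ⟨⟨by left; rfl, fun i => by left; rfl⟩, ?_⟩
    have : (atm 0 2).map (fun n => if n = 2 then 4 else 5)
        = (atm 0 0).map (fun n => if n = 0 then 4 else 5) := by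
      simp only [atm, Lit.map, Lit.mk.injEq, heq_eq_eq, true_and]
      constructor <;> (funext i; simp)
    rw [this]; exact hRz
  rw [h2] at hmem2
  rcases hmem2 with h | h
  · have := congrArg Lit.rel h
    simp [atm] at this
  · simp only [Set.mem_singleton_iff, atm, Lit.mk.injEq, heq_eq_eq, funext_iff] at h
    exact absurd (h.2.2 ⟨0, Nat.one_pos⟩) (by norm_num)
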